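/- In the non-completeness counterexample, S=[E_1,R_1,E_4,R_3,E_5] and S′=[E_1,R_1,E_2,R_2,E_3,R_3,E_5] are intersectable: there is a skeleton σ and b ∈ σ(E_1) with S|_b ∩ S′|_b ≠ ∅; this is consistent with the intersectability criterion since LLRSP(S,S′) + LLRSP(S̃,S̃′) ≤ |S|. -/

import Mathlib

/-- Kinds of item classes in a relational schema. -/
inductive ItemKind | entity | relationship
deriving DecidableEq

/-- Cardinalities. -/
inductive Card | one | many
deriving DecidableEq

/-- A relational schema: item classes with kinds, participation of entity
classes in relationship classes, and a cardinality function `card R E`. -/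
structure Schema where
  Class : Type
  kind : Class → ItemKind
  participates : Class → Class → Prop   -- `participates E R`
  card : Class → Class → Card           -- `card R E`

namespace Schema

/-- Condition (1) of relational paths: alternation between entity and
relationship classes, with participation at each consecutive pair. -/
def Alternates (S : Schema) (P : List S.Class) : Prop :=
  ∀ i a b, P[i]? = some a → P[i+1]? = some b →
    ((S.kind a = .entity ∧ S.kind b = .relationship ∧ S.participates a b) ∨
     (S.kind a = .relationship ∧ S.kind b = .entity ∧ S.participates b a))

/-- Condition (2): in every subsequence `[E, R, E']`, `E ≠ E'`. -/
def NoERE (S : Schema) (P : List S.Class) : Prop :=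
  ∀ i a b c, P[i]? = some a → P[i+1]? = some b → P[i+2]? = some c →
    S.kind a = .entity → a ≠ c

/-- Condition (3): in every subsequence `[R, E, R']` with `R = R'`,
`card (R, E) = many`. -/
def CardMany (S : Schema) (P : List S.Class) : Prop :=
  ∀ i a b c, P[i]? = some a → P[i+1]? = some b → P[i+2]? = some c →
    S.kind a = .relationship → a = c → S.card a b = .many

/-- A valid relational path. -/
def ValidPath (S : Schema) (P : List S.Class) : Prop :=
  P ≠ [] ∧ S.Alternates P ∧ S.NoERE P ∧ S.CardMany P

end Schema

/-- A relational skeleton instantiating a schema: items with classes and a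
symmetric adjacency relation, respecting participation and cardinality
constraints (`card = one` forces at most one adjacent relationship instance;
relationship instances have exactly one adjacent entity instance per
participating entity class). -/
structure Skeleton (S : Schema) where
  Item : Type
  classOf : Item → S.Class
  adj : Item → Item → Prop
  adj_symm : ∀ {i j}, adj i j → adj j i
  adj_alt : ∀ {i j}, adj i j →
    (S.kind (classOf i) = .entity ∧ S.kind (classOf j) = .relationship ∧
      S.participates (classOf i) (classOf j)) ∨
    (S.kind (classOf i) = .relationship ∧ S.kind (classOf j) = .entity ∧
      S.participates (classOf j) (classOf i))
  card_one : ∀ {e r r'}, S.kind (classOf e) = .entity →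
    S.card (classOf r) (classOf e) = .one → classOf r = classOf r' →
    adj e r → adj e r' → r = r'
  rel_unique : ∀ {r i j}, S.kind (classOf r) = .relationship →
    adj r i → adj r j → classOf i = classOf j → i = j
  rel_total : ∀ {r E}, S.kind (classOf r) = .relationship →
    S.participates E (classOf r) → ∃ e, classOf e = E ∧ adj r e

namespace Skeleton

variable {S : Schema} (σ : Skeleton S)

/-- Auxiliary recursion for terminal sets under bridge burning semantics:
`(tsetAux P b ℓ).1` is the terminal set `P^{1:ℓ+1}|_b` (0-indexed `ℓ`) and
`(tsetAux P b ℓ).2` is the set of all items visited up to step `ℓ`. -/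
def tsetAux (P : List S.Class) (b : σ.Item) : ℕ → Set σ.Item × Set σ.Item
  | 0 => ({b}, {b})
  | ℓ+1 =>
      let prev := tsetAux P b ℓ
      let cur : Set σ.Item :=
        {i | P[ℓ+1]? = some (σ.classOf i) ∧ (∃ j ∈ prev.1, σ.adj i j) ∧
             i ∉ prev.2}
      (cur, prev.2 ∪ cur)

/-- The terminal set `P^{1:ℓ+1}|_b` (so `ℓ` is 0-indexed: `tset P b 0 = {b}`). -/
def tset (P : List S.Class) (b : σ.Item) (ℓ : ℕ) : Set σ.Item :=
  (σ.tsetAux P b ℓ).1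

/-- The (full) terminal set `P|_b`. -/
def tfull (P : List S.Class) (b : σ.Item) : Set σ.Item :=
  σ.tset P b (P.length - 1)

end Skeleton

/-- `LLRSP(P,Q)`: the length of the longest required shared path: the largest
`ℓ ≥ 1` such that `P^{1:ℓ} = Q^{1:ℓ}` and in every skeleton, from every base,
the terminal set of the length-`ℓ` prefix is a singleton. -/
noncomputable def llrsp (S : Schema) (P Q : List S.Class) : ℕ :=
  sSup {ℓ | 1 ≤ ℓ ∧ ℓ ≤ P.length ∧ P.take ℓ = Q.take ℓ ∧
    ∀ (σ : Skeleton S) (b : σ.Item), P[0]? = some (σ.classOf b) →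
      ∃ x, σ.tset P b (ℓ-1) = {x}}

/-- Item classes of the non-completeness counterexample schema. -/
inductive C13 | E1 | E2 | E3 | E4 | E5 | R1 | R2 | R3
deriving DecidableEq

open C13 in
/-- The non-completeness counterexample schema: `R1=⟨E1,E2,E4⟩`,
`R2=⟨E2,E3⟩`, `R3=⟨E3,E4,E5⟩`, with all cardinalities `one`. -/
def S13 : Schema where
  Class := C13
  kind := fun c => match c with
    | R1 | R2 | R3 => .relationship
    | _ => .entity
  participates := fun e r =>
    (e, r) ∈ ([(E1,R1),(E2,R1),(E4,R1),(E2,R2),(E3,R2),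
               (E3,R3),(E4,R3),(E5,R3)] : List (C13 × C13))
  card := fun _ _ => .one

open C13 in
def P13 : List C13 := [E1,R1,E2,R2,E3]
open C13 in
def Q13 : List C13 := [E1,R1,E4,R3,E3,R2,E2]
open C13 in
def S14 : List C13 := [E1,R1,E4,R3,E5]
open C13 in
def Sp13 : List C13 := [E1,R1,E2,R2,E3,R3,E5]
open C13 in
def D1 : List C13 := [E2,R2,E3,R3,E4,R1,E2,R2,E3]
open C13 in
def D2 : List C13 := [E2,R2,E3,R3,E5]


instance : Fintype C13 := ⟨{C13.E1, C13.E2, C13.E3, C13.E4, C13.E5, C13.R1, C13.R2, C13.R3}, by intro x; cases x <;> decide⟩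

instance : DecidableEq S13.Class := inferInstanceAs (DecidableEq C13)
instance : Fintype S13.Class := inferInstanceAs (Fintype C13)

instance (e r : C13) : Decidable (S13.participates e r) := by
  unfold S13; exact inferInstanceAs (Decidable (_ ∈ _))

/-- adjacency of the canonical skeleton -/
def adj13 (i j : C13) : Prop := S13.participates i j ∨ S13.participates j i

instance (i j : C13) : Decidable (adj13 i j) := inferInstanceAs (Decidable (_ ∨ _))

open C13 in
def sk13 : Skeleton S13 where
  Item := C13
  classOf := id
  adj := adj13
  adj_symm := fun h => h.symm
  adj_alt := by decide
  card_one := by intro e r r' _ _ h _ _; exact h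
  rel_unique := by intro r i j _ _ _ h; exact h
  rel_total := by intro r E _ h; exact ⟨E, rfl, Or.inr h⟩

open C13

lemma sk13_step {P : List C13} {b : C13} {l : ℕ} {s v : Set C13} {a : C13}
    (hprev : sk13.tsetAux P b l = (s, v))
    (h1 : P[l+1]? = some a) (h2 : ∃ j ∈ s, adj13 a j) (h3 : a ∉ v)
    (h4 : ∀ i, P[l+1]? = some i → (∃ j ∈ s, adj13 i j) → i ∉ v → i = a) :
    sk13.tsetAux P b (l+1) = ({a}, v ∪ {a}) := by
  have hset : {i | P[l+1]? = some i ∧ (∃ j ∈ s, adj13 i j) ∧ i ∉ v}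
      = ({a} : Set C13) := by
    ext x
    simp only [Set.mem_setOf_eq, Set.mem_singleton_iff]
    constructor
    · rintro ⟨u1, u2, u3⟩; exact h4 x u1 u2 u3
    · rintro rfl; exact ⟨h1, h2, h3⟩
  show (_, _) = _
  rw [hprev]
  refine Prod.ext ?_ ?_
  · exact hset
  · exact congrArg (v ∪ ·) hset

lemma sk13_s14_4 : sk13.tsetAux S14 E1 4
    = ({E5}, ((({E1} ∪ {R1}) ∪ {E4}) ∪ {R3}) ∪ {E5}) := by
  have h0 : sk13.tsetAux S14 E1 0 = ({E1}, {E1}) := rfl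
  have h1 := sk13_step (a := R1) h0 (by decide) ⟨E1, rfl, by decide⟩
    (by rintro ⟨⟩) (by intro i h _ _; exact (Option.some_inj.mp h).symm)
  have h2 := sk13_step (a := E4) h1 (by decide) ⟨R1, rfl, by decide⟩
    (by rintro (h|h) <;> cases h) (by intro i h _ _; exact (Option.some_inj.mp h).symm)
  have h3 := sk13_step (a := R3) h2 (by decide) ⟨E4, rfl, by decide⟩
    (by rintro ((h|h)|h) <;> cases h) (by intro i h _ _; exact (Option.some_inj.mp h).symm)
  exact sk13_step (a := E5) h3 (by decide) ⟨R3, rfl, by decide⟩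
    (by rintro (((h|h)|h)|h) <;> cases h) (by intro i h _ _; exact (Option.some_inj.mp h).symm)

lemma sk13_sp_6 : sk13.tsetAux Sp13 E1 6
    = ({E5}, ((((({E1} ∪ {R1}) ∪ {E2}) ∪ {R2}) ∪ {E3}) ∪ {R3}) ∪ {E5}) := by
  have h0 : sk13.tsetAux Sp13 E1 0 = ({E1}, {E1}) := rfl
  have h1 := sk13_step (a := R1) h0 (by decide) ⟨E1, rfl, by decide⟩
    (by rintro ⟨⟩) (by intro i h _ _; exact (Option.some_inj.mp h).symm)
  have h2 := sk13_step (a := E2) h1 (by decide) ⟨R1, rfl, by decide⟩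
    (by rintro (h|h) <;> cases h) (by intro i h _ _; exact (Option.some_inj.mp h).symm)
  have h3 := sk13_step (a := R2) h2 (by decide) ⟨E2, rfl, by decide⟩
    (by rintro ((h|h)|h) <;> cases h) (by intro i h _ _; exact (Option.some_inj.mp h).symm)
  have h4 := sk13_step (a := E3) h3 (by decide) ⟨R2, rfl, by decide⟩
    (by rintro (((h|h)|h)|h) <;> cases h) (by intro i h _ _; exact (Option.some_inj.mp h).symm)
  have h5 := sk13_step (a := R3) h4 (by decide) ⟨E3, rfl, by decide⟩
    (by rintro ((((h|h)|h)|h)|h) <;> cases h) (by intro i h _ _; exact (Option.some_inj.mp h).symm)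
  exact sk13_step (a := E5) h5 (by decide) ⟨R3, rfl, by decide⟩
    (by rintro (((((h|h)|h)|h)|h)|h) <;> cases h) (by intro i h _ _; exact (Option.some_inj.mp h).symm)

lemma llrsp_bound {P Q : List C13} (h : P[2]? ≠ Q[2]?) :
    llrsp S13 P Q ≤ 2 := by
  have : ∀ m ∈ {ℓ | 1 ≤ ℓ ∧ ℓ ≤ P.length ∧ P.take ℓ = Q.take ℓ ∧
      ∀ (σ : Skeleton S13) (b : σ.Item), P[0]? = some (σ.classOf b) →
        ∃ x, σ.tset P b (ℓ-1) = {x}}, m ≤ 2 := by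
    intro m hm
    obtain ⟨h1, h2, h3, _⟩ := hm
    by_contra hc
    push_neg at hc
    apply h
    have heq : (P.take m)[2]? = (Q.take m)[2]? := by rw [h3]
    rwa [List.getElem?_take, List.getElem?_take, if_pos (by omega),
      if_pos (by omega)] at heq
  exact csSup_le' this

/-- in the non-completeness counterexample, `S` and `S′` are
intersectable, consistently with the intersectability criterion:
`LLRSP(S,S′) + LLRSP(S̃,S̃′) ≤ |S|`. -/
theorem S_Sp_intersectable :
    (∃ (σ : Skeleton S13) (b : σ.Item), σ.classOf b = C13.E1 ∧
      (σ.tfull S14 b ∩ σ.tfull Sp13 b).Nonempty) ∧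
    llrsp S13 S14 Sp13 + llrsp S13 S14.reverse Sp13.reverse ≤ S14.length := by
  constructor
  · refine ⟨sk13, E1, rfl, E5, ?_, ?_⟩
    · show E5 ∈ (sk13.tsetAux S14 E1 (S14.length - 1)).1
      rw [show S14.length - 1 = 4 from rfl, sk13_s14_4]; rfl
    · show E5 ∈ (sk13.tsetAux Sp13 E1 (Sp13.length - 1)).1
      rw [show Sp13.length - 1 = 6 from rfl, sk13_sp_6]; rfl
  · have h1 : llrsp S13 S14 Sp13 ≤ 2 := llrsp_bound (by decide)
    have h2 : llrsp S13 S14.reverse Sp13.reverse ≤ 2 := llrsp_bound (by decide)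
    show _ ≤ 5
    omega
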